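/- For every m ≥ 2: (1) the word B_m occurs in the concatenation B_m B_{m−1} B_{m+1} B_m at exactly two positions, namely 1 and 7·2^{m−1}+1; (2) the word B_m occurs in the concatenation B_m B_{m−1} B_m at exactly two positions, namely 1 and 3·2^{m−1}+1. -/

import Mathlib

namespace PD

/-- The period-doubling substitution on the alphabet `Bool`,
where `false` stands for the letter `a` and `true` for the letter `b`:
`σ(a) = ab`, `σ(b) = aa`. -/
def sub : Bool → List Bool
  | false => [false, true]
  | true  => [false, false]

/-- The substitution applied to a finite word. -/
def subW (w : List Bool) : List Bool := w.flatMap sub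

/-- `A m = σ^m(a)`. -/
def A (m : ℕ) : List Bool := subW^[m] [false]

/-- `B m = σ^m(b)`. -/
def B (m : ℕ) : List Bool := subW^[m] [true]

/-- The doubling sequence `D∞` (0-indexed: `D n` is the `(n+1)`-th letter),
the fixed point of `σ` beginning with `a`; `A m` is a prefix of `A (m+1)`,
and `A (n+1)` has length `2^(n+1) > n`. -/
def D (n : ℕ) : Bool := (A (n + 1)).getD n false

/-- `δ m`, the last letter of `A m`. -/
def delta (m : ℕ) : Bool := (A m).getLastD false

/-- The envelope words (`i ∈ {1,2}`): `E m 1 = A m` minus its last letter,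
`E m 2 = A (m-1) ++ (A m` minus its last letter `)`. -/
def E (m i : ℕ) : List Bool :=
  if i = 1 then (A m).dropLast else A (m - 1) ++ (A m).dropLast

/-- `w` occurs at the (1-indexed) position `j` in the finite word `τ`. -/
def OccursIn (w τ : List Bool) (j : ℕ) : Prop :=
  1 ≤ j ∧ (τ.drop (j - 1)).take w.length = w

/-- `w` occurs at the (1-indexed) position `j` in the doubling sequence. -/
def OccursD (w : List Bool) (j : ℕ) : Prop :=
  1 ≤ j ∧ ∀ k < w.length, D (j - 1 + k) = w.getD k false

/-- `w` is a factor of the doubling sequence. -/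
def FactorD (w : List Bool) : Prop := ∃ j, OccursD w j

/-- `L w p`: the (1-indexed) starting position of the `p`-th occurrence of `w`
in the doubling sequence, occurrences being ordered by starting position.
(Each factor occurs infinitely often, so `Nat.nth` enumerates all occurrences
in increasing order.) -/
noncomputable def L (w : List Bool) (p : ℕ) : ℕ := Nat.nth (OccursD w) (p - 1)

/-- The strict total order on envelope words:
`E m₁ i₁ ⊏ E m₂ i₂` iff `m₁ < m₂`, or `m₁ = m₂` and `i₁ < i₂`. -/
def EnvLt (m₁ i₁ m₂ i₂ : ℕ) : Prop := m₁ < m₂ ∨ (m₁ = m₂ ∧ i₁ < i₂)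

/-- `Env(w) = E m i`: the envelope word `E m i` is the `⊏`-minimal envelope
word containing `w` as a factor. -/
def IsEnv (w : List Bool) (m i : ℕ) : Prop :=
  1 ≤ m ∧ (i = 1 ∨ i = 2) ∧ w <:+: E m i ∧
    ∀ m' i', 1 ≤ m' → (i' = 1 ∨ i' = 2) → EnvLt m' i' m i → ¬ w <:+: E m' i'

/-- The substitution `φ₁(a) = a`, `φ₁(b) = bb`. -/
def phi1 : Bool → List Bool
  | false => [false]
  | true  => [true, true]

/-- `Θ₁ = φ₁(D∞)` (0-indexed): `φ₁(A (n+1))` is a prefix of `Θ₁` of length `> n`. -/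
def Theta1 (n : ℕ) : Bool := ((A (n + 1)).flatMap phi1).getD n false

/-- The substitution `φ₂(a) = ab`, `φ₂(b) = acac`, over the alphabet `Fin 3`
where `0` stands for `a`, `1` for `b` and `2` for `c`. -/
def phi2 : Bool → List (Fin 3)
  | false => [0, 1]
  | true  => [0, 2, 0, 2]

/-- `Θ₂ = φ₂(D∞)` (0-indexed). -/
def Theta2 (n : ℕ) : Fin 3 := ((A (n + 1)).flatMap phi2).getD n 0

/-- `N₁(x,p)`: the number of letters `x` among the first `p` letters of `Θ₁`. -/
def N1 (x : Bool) (p : ℕ) : ℕ := ((List.range p).map Theta1).count x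

/-- `N₂(x,p)`: the number of letters `x` among the first `p` letters of `Θ₂`. -/
def N2 (x : Fin 3) (p : ℕ) : ℕ := ((List.range p).map Theta2).count x

end PD


namespace PD

lemma subW_cons (x : Bool) (w : List Bool) : subW (x :: w) = sub x ++ subW w := rfl

lemma subW_append (u v : List Bool) : subW (u ++ v) = subW u ++ subW v :=
  List.flatMap_append

lemma length_subW (w : List Bool) : (subW w).length = 2 * w.length := by
  induction w with
  | nil => rfl
  | cons x w ih =>
    cases x <;> simp [subW_cons, sub, ih] <;> ring

lemma subW_take (w : List Bool) (k : ℕ) : (subW w).take (2 * k) = subW (w.take k) := by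
  induction w generalizing k with
  | nil => simp [subW]
  | cons x w ih =>
    cases k with
    | zero => simp [subW]
    | succ k =>
      have h2 : 2 * (k + 1) = 2 * k + 1 + 1 := by ring
      cases x <;>
        simp [subW_cons, sub, h2, List.take_succ_cons, ih]

lemma subW_drop (w : List Bool) (k : ℕ) : (subW w).drop (2 * k) = subW (w.drop k) := by
  induction w generalizing k with
  | nil => simp [subW]
  | cons x w ih =>
    cases k with
    | zero => simp
    | succ k =>
      have h2 : 2 * (k + 1) = 2 * k + 1 + 1 := by ring
      cases x <;>
        simp [subW_cons, sub, h2, List.drop_succ_cons, ih]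

lemma subW_inj {u v : List Bool} (h : subW u = subW v) : u = v := by
  induction u generalizing v with
  | nil =>
    cases v with
    | nil => rfl
    | cons y v => cases y <;> simp [subW, subW_cons, sub] at h
  | cons x u ih =>
    cases v with
    | nil => cases x <;> simp [subW, subW_cons, sub] at h
    | cons y v =>
      cases x <;> cases y <;> simp [subW_cons, sub] at h <;>
        simp [ih h]

lemma subW_getD_even (w : List Bool) (i : ℕ) : (subW w).getD (2 * i) false = false := by
  induction w generalizing i with
  | nil => simp [subW]
  | cons x w ih =>
    cases i with
    | zero => cases x <;> rfl
    | succ i =>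
      have h2 : 2 * (i + 1) = 2 * i + 1 + 1 := by ring
      cases x <;> simpa [subW_cons, sub, h2, List.getD_cons_succ] using ih i

lemma B_succ (m : ℕ) : B (m + 1) = subW (B m) := by
  rw [B, B, Function.iterate_succ_apply']

lemma B_length (m : ℕ) : (B m).length = 2 ^ m := by
  induction m with
  | zero => rfl
  | succ m ih => rw [B_succ, length_subW, ih, pow_succ]; ring

lemma B_ne_nil (m : ℕ) : B m ≠ [] := by
  intro h
  have h2 := B_length m
  rw [h] at h2
  have h3 : (0:ℕ) < 2 ^ m := pow_pos (by norm_num) m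
  simp at h2
  omega

lemma B_shape (m : ℕ) (hm : 2 ≤ m) : ∃ t, B m = false :: true :: t := by
  obtain ⟨k, rfl⟩ : ∃ k, m = k + 2 := ⟨m - 2, by omega⟩
  have h1 : B (k + 1) ≠ [] := B_ne_nil _
  obtain ⟨y, t, ht⟩ := List.exists_cons_of_ne_nil h1
  have hy : ∃ t', B (k + 1) = false :: t' := by
    rw [B_succ] at ht ⊢
    obtain ⟨z, s, hs⟩ := List.exists_cons_of_ne_nil (B_ne_nil k)
    rw [hs]
    cases z <;> exact ⟨_, rfl⟩
  obtain ⟨t', ht'⟩ := hy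
  refine ⟨subW t', ?_⟩
  rw [show k + 2 = (k + 1) + 1 from rfl, B_succ, ht']
  rfl

lemma OccursIn.pos_le {w τ : List Bool} {j : ℕ} (h : OccursIn w τ j) (hw : w ≠ []) :
    j - 1 + w.length ≤ τ.length := by
  have hw0 : 0 < w.length := List.length_pos_iff.mpr hw
  obtain ⟨h1, h2⟩ := h
  have h3 : w.length ≤ (τ.drop (j - 1)).length := by
    conv_lhs => rw [← h2]
    rw [List.length_take]
    exact min_le_right _ _
  rw [List.length_drop] at h3
  omega

lemma occ_subW_iff (m : ℕ) (hm : 2 ≤ m) (w : List Bool) (j : ℕ) :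
    OccursIn (B m) (subW w) j ↔ ∃ i, j = 2 * i + 1 ∧ OccursIn (B (m - 1)) w (i + 1) := by
  obtain ⟨k, rfl⟩ : ∃ k, m = k + 2 := ⟨m - 2, by omega⟩
  have hk1 : k + 2 - 1 = k + 1 := rfl
  rw [hk1]
  constructor
  · intro h
    have hlen := h.pos_le (B_ne_nil _)
    obtain ⟨h1, h2⟩ := h
    rw [B_length] at hlen h2
    -- the letter at 0-based index j of subW w is true
    obtain ⟨t, ht⟩ := B_shape (k + 2) (by omega)
    have hdl : ((subW w).drop (j - 1)).length = (subW w).length - (j - 1) :=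
      List.length_drop
    have hgd : ((subW w).drop (j - 1)).getD 1 false = true := by
      have h3 : (((subW w).drop (j - 1)).take (2 ^ (k + 2))).getD 1 false = true := by
        rw [h2, ht]; rfl
      have hpow : 1 < 2 ^ (k + 2) := by
        have h4 : (2:ℕ) ^ 1 ≤ 2 ^ (k + 2) := Nat.pow_le_pow_right (by norm_num) (by omega)
        norm_num at h4
        omega
      rw [List.getD_eq_getElem?_getD, List.getElem?_take, if_pos hpow] at h3
      rwa [List.getD_eq_getElem?_getD]
    have hj : (subW w).getD j false = true := by
      have := List.getD_eq_getElem?_getD (l := (subW w).drop (j - 1)) (i := 1) (a := false)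
      rw [List.getElem?_drop] at this
      rw [hgd] at this
      have hj1 : j - 1 + 1 = j := by omega
      rw [hj1] at this
      rw [List.getD_eq_getElem?_getD, ← this]
    -- hence j is odd
    have hodd : ∃ i, j = 2 * i + 1 := by
      rcases Nat.even_or_odd j with ⟨i, hi⟩ | ⟨i, hi⟩
      · exfalso
        have := subW_getD_even w i
        rw [show 2 * i = j by omega] at this
        rw [this] at hj
        exact Bool.false_ne_true hj
      · exact ⟨i, by omega⟩
    obtain ⟨i, rfl⟩ := hodd
    refine ⟨i, rfl, by omega, ?_⟩
    have hd : 2 * i + 1 - 1 = 2 * i := rfl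
    rw [hd, subW_drop] at h2
    rw [show (2:ℕ) ^ (k + 2) = 2 * 2 ^ (k + 1) by ring] at h2
    rw [subW_take] at h2
    rw [show B (k + 2) = subW (B (k + 1)) from B_succ (k + 1)] at h2
    have := subW_inj h2
    rw [B_length, Nat.add_sub_cancel, this]
  · rintro ⟨i, rfl, hocc⟩
    obtain ⟨h1, h2⟩ := hocc
    rw [B_length, Nat.add_sub_cancel] at h2
    refine ⟨by omega, ?_⟩
    rw [B_length]
    have hd : 2 * i + 1 - 1 = 2 * i := rfl
    rw [hd, subW_drop, show (2:ℕ) ^ (k + 2) = 2 * 2 ^ (k + 1) by ring, subW_take, h2,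
      ← B_succ]

lemma step_set (m : ℕ) (hm : 2 ≤ m) (W : List Bool) (c : ℕ) (hc : 1 ≤ c)
    (IH : {j : ℕ | OccursIn (B (m - 1)) W j} = ({1, c} : Set ℕ)) :
    {j : ℕ | OccursIn (B m) (subW W) j} = ({1, 2 * c - 1} : Set ℕ) := by
  have hIH : ∀ i, OccursIn (B (m - 1)) W i ↔ (i = 1 ∨ i = c) := fun i => by
    have := Set.ext_iff.mp IH i
    simpa using this
  ext j
  simp only [Set.mem_setOf_eq, Set.mem_insert_iff, Set.mem_singleton_iff]
  rw [occ_subW_iff m hm]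
  constructor
  · rintro ⟨i, rfl, hi⟩
    rcases (hIH _).mp hi with h | h <;> omega
  · rintro (rfl | rfl)
    · exact ⟨0, rfl, (hIH _).mpr (Or.inl rfl)⟩
    · exact ⟨c - 1, by omega, (hIH _).mpr (Or.inr (by omega))⟩

end PD

open PD
/-- For every `m ≥ 2`: (1) `B m` occurs in `B m ++ B (m-1) ++ B (m+1) ++ B m` at
exactly the (1-indexed) positions `1` and `7·2^(m-1)+1`; (2) `B m` occurs in
`B m ++ B (m-1) ++ B m` at exactly the positions `1` and `3·2^(m-1)+1`. -/
theorem doubling_positions_B (m : ℕ) (hm : 2 ≤ m) :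
    {j : ℕ | OccursIn (B m) (B m ++ B (m - 1) ++ B (m + 1) ++ B m) j}
        = {1, 7 * 2 ^ (m - 1) + 1} ∧
      {j : ℕ | OccursIn (B m) (B m ++ B (m - 1) ++ B m) j} = {1, 3 * 2 ^ (m - 1) + 1} := by
  induction m, hm using Nat.le_induction with
  | base =>
    constructor
    · ext j
      simp only [Set.mem_setOf_eq, Set.mem_insert_iff, Set.mem_singleton_iff]
      norm_num
      constructor
      · intro h
        have hb := h.pos_le (B_ne_nil _)
        rw [B_length] at hb
        simp only [List.length_append, B_length] at hb
        obtain ⟨h1, h2⟩ := h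
        norm_num at hb
        have hub : j ≤ 15 := by omega
        interval_cases j <;> revert h2 <;> decide
      · rintro (rfl | rfl) <;> exact ⟨by norm_num, by decide⟩
    · ext j
      simp only [Set.mem_setOf_eq, Set.mem_insert_iff, Set.mem_singleton_iff]
      norm_num
      constructor
      · intro h
        have hb := h.pos_le (B_ne_nil _)
        rw [B_length] at hb
        simp only [List.length_append, B_length] at hb
        obtain ⟨h1, h2⟩ := h
        norm_num at hb
        have hub : j ≤ 7 := by omega
        interval_cases j <;> revert h2 <;> decide
      · rintro (rfl | rfl) <;> exact ⟨by norm_num, by decide⟩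
  | succ m hm IH =>
    obtain ⟨k, rfl⟩ : ∃ k, m = k + 2 := ⟨m - 2, by omega⟩
    obtain ⟨IH1, IH2⟩ := IH
    have e1 : k + 2 - 1 = k + 1 := by omega
    have e2 : k + 2 + 1 - 1 = k + 2 := by omega
    have e3 : k + 2 + 1 = k + 3 := by omega
    have e4 : k + 3 - 1 = k + 2 := by omega
    have e5 : k + 3 + 1 = k + 2 + 2 := by omega
    have epow : (2:ℕ) ^ (k + 2) = 2 * 2 ^ (k + 1) := by rw [pow_succ]; ring
    rw [e1] at IH1 IH2
    rw [e2, e3, e5]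
    have hW1 : B (k + 3) ++ B (k + 2) ++ B (k + 2 + 2) ++ B (k + 3)
        = subW (B (k + 2) ++ B (k + 1) ++ B (k + 3) ++ B (k + 2)) := by
      simp only [subW_append, ← B_succ]
    have hW2 : B (k + 3) ++ B (k + 2) ++ B (k + 3)
        = subW (B (k + 2) ++ B (k + 1) ++ B (k + 2)) := by
      simp only [subW_append, ← B_succ]
    constructor
    · have h := step_set (k + 3) (by omega) (B (k + 2) ++ B (k + 1) ++ B (k + 3) ++ B (k + 2))
        (7 * 2 ^ (k + 1) + 1) (Nat.le_add_left 1 _) (by rw [e4]; exact IH1)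
      rw [← hW1] at h
      rw [h]
      have : 2 * (7 * 2 ^ (k + 1) + 1) - 1 = 7 * 2 ^ (k + 2) + 1 := by rw [epow]; omega
      rw [this]
    · have h := step_set (k + 3) (by omega) (B (k + 2) ++ B (k + 1) ++ B (k + 2))
        (3 * 2 ^ (k + 1) + 1) (Nat.le_add_left 1 _) (by rw [e4]; exact IH2)
      rw [← hW2] at h
      rw [h]
      have : 2 * (3 * 2 ^ (k + 1) + 1) - 1 = 3 * 2 ^ (k + 2) + 1 := by rw [epow]; omega
      rw [this]
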